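/- arXiv:2104.13405 — 2 statements merged into one kernel-verified Lean document; each statement's English description precedes it below -/
import Mathlib

section
/- The function β(c) := (8π/27) · (Σ_{k=1}^∞ e^{−ck}/k³)⁴ / (Σ_{k=1}^∞ e^{−ck}/k⁴)³ is strictly decreasing on (0, ∞). -/
open Real

private lemma summable_aux (n : ℕ) {c : ℝ} (hc : 0 < c) :
    Summable (fun k : ℕ => Real.exp (-c * ((k : ℝ) + 1)) / ((k : ℝ) + 1) ^ n) := by
  have hgeo : Summable (fun k : ℕ => Real.exp (-c) ^ (k + 1)) := by
    have := (summable_geometric_of_lt_one (le_of_lt (Real.exp_pos (-c)))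
      (Real.exp_lt_one_iff.mpr (by linarith))).mul_left (Real.exp (-c))
    refine this.congr fun k => ?_
    rw [pow_succ]; ring
  refine Summable.of_nonneg_of_le (fun k => by positivity) (fun k => ?_) hgeo
  have hk : (1 : ℝ) ≤ ((k : ℝ) + 1) ^ n :=
    one_le_pow₀ (by linarith [Nat.cast_nonneg (α := ℝ) k])
  calc Real.exp (-c * ((k : ℝ) + 1)) / ((k : ℝ) + 1) ^ n
      ≤ Real.exp (-c * ((k : ℝ) + 1)) / 1 :=
        div_le_div_of_nonneg_left (le_of_lt (Real.exp_pos _)) one_pos hk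
    _ = Real.exp (-c) ^ (k + 1) := by
        rw [div_one, ← Real.exp_nat_mul]; push_cast; ring_nf

private lemma S_pos (n : ℕ) {c : ℝ} (hc : 0 < c) :
    0 < ∑' k : ℕ, Real.exp (-c * ((k : ℝ) + 1)) / ((k : ℝ) + 1) ^ n :=
  Summable.tsum_pos (summable_aux n hc) (fun k => by positivity) 0 (by positivity)

private lemma hasDerivAt_S (n : ℕ) {c : ℝ} (hc : 0 < c) :
    HasDerivAt (fun x : ℝ => ∑' k : ℕ, Real.exp (-x * ((k : ℝ) + 1)) / ((k : ℝ) + 1) ^ (n + 1))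
      (-∑' k : ℕ, Real.exp (-c * ((k : ℝ) + 1)) / ((k : ℝ) + 1) ^ n) c := by
  have key : HasDerivAt
      (fun x : ℝ => ∑' k : ℕ, Real.exp (-x * ((k : ℝ) + 1)) / ((k : ℝ) + 1) ^ (n + 1))
      (∑' k : ℕ, -(Real.exp (-c * ((k : ℝ) + 1)) / ((k : ℝ) + 1) ^ n)) c := by
    refine hasDerivAt_tsum_of_isPreconnected
      (u := fun k : ℕ => Real.exp (-(c/2) * ((k : ℝ) + 1)))
      (g' := fun k y => -(Real.exp (-y * ((k : ℝ) + 1)) / ((k : ℝ) + 1) ^ n))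
      ((summable_aux 0 (by linarith : (0:ℝ) < c/2)).congr fun k => by simp)
      isOpen_Ioi isPreconnected_Ioi (fun k y _ => ?_) (fun k y hy => ?_)
      (Set.mem_Ioi.mpr (by linarith : c/2 < c)) (summable_aux (n + 1) hc)
      (Set.mem_Ioi.mpr (by linarith : c/2 < c))
    · have hk : (0 : ℝ) < (k : ℝ) + 1 := by positivity
      have h1 : HasDerivAt (fun y : ℝ => -y * ((k : ℝ) + 1)) (-((k : ℝ) + 1)) y := by
        simpa using ((hasDerivAt_id y).neg.mul_const ((k : ℝ) + 1))
      have h2 := (h1.exp).div_const (((k : ℝ) + 1) ^ (n + 1))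
      convert h2 using 1
      rfl
      rw [pow_succ, mul_neg, neg_div, mul_div_mul_right _ _ hk.ne']
    · rw [Real.norm_eq_abs, abs_neg, abs_of_nonneg (by positivity)]
      have hk : (1 : ℝ) ≤ ((k : ℝ) + 1) ^ n :=
        one_le_pow₀ (by linarith [Nat.cast_nonneg (α := ℝ) k])
      have hy2 : c / 2 < y := hy
      calc Real.exp (-y * ((k : ℝ) + 1)) / ((k : ℝ) + 1) ^ n
          ≤ Real.exp (-y * ((k : ℝ) + 1)) / 1 :=
            div_le_div_of_nonneg_left (le_of_lt (Real.exp_pos _)) one_pos hk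
        _ ≤ Real.exp (-(c/2) * ((k : ℝ) + 1)) := by
            rw [div_one]
            apply Real.exp_le_exp.mpr
            have : (0 : ℝ) < (k : ℝ) + 1 := by positivity
            nlinarith
  simpa [tsum_neg] using key

private lemma cauchy_schwarz {c : ℝ} (hc : 0 < c) :
    (∑' k : ℕ, Real.exp (-c * ((k : ℝ) + 1)) / ((k : ℝ) + 1) ^ 3) ^ 2 ≤
      (∑' k : ℕ, Real.exp (-c * ((k : ℝ) + 1)) / ((k : ℝ) + 1) ^ 2) *
      (∑' k : ℕ, Real.exp (-c * ((k : ℝ) + 1)) / ((k : ℝ) + 1) ^ 4) := by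
  set a : ℕ → ℝ := fun k => Real.exp (-(c/2) * ((k : ℝ) + 1)) / ((k : ℝ) + 1) with ha
  set b : ℕ → ℝ := fun k => Real.exp (-(c/2) * ((k : ℝ) + 1)) / ((k : ℝ) + 1) ^ 2 with hb
  have hab : ∀ k : ℕ, a k * b k = Real.exp (-c * ((k : ℝ) + 1)) / ((k : ℝ) + 1) ^ 3 := by
    intro k
    simp only [ha, hb]
    rw [div_mul_div_comm, ← Real.exp_add]
    congr 1
    · ring_nf
    · ring
  have ha2 : ∀ k : ℕ, a k ^ 2 = Real.exp (-c * ((k : ℝ) + 1)) / ((k : ℝ) + 1) ^ 2 := by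
    intro k
    simp only [ha, div_pow]
    congr 1
    rw [← Real.exp_nat_mul]
    congr 1
    push_cast; ring
  have hb2 : ∀ k : ℕ, b k ^ 2 = Real.exp (-c * ((k : ℝ) + 1)) / ((k : ℝ) + 1) ^ 4 := by
    intro k
    simp only [hb, div_pow, ← pow_mul]
    congr 1
    rw [← Real.exp_nat_mul]
    congr 1
    push_cast; ring
  have hsab : Summable (fun k => a k * b k) :=
    (summable_aux 3 hc).congr fun k => (hab k).symm
  have hsa2 : Summable (fun k => a k ^ 2) :=
    (summable_aux 2 hc).congr fun k => (ha2 k).symm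
  have hsb2 : Summable (fun k => b k ^ 2) :=
    (summable_aux 4 hc).congr fun k => (hb2 k).symm
  have hmain : (∑' k, a k * b k) ^ 2 ≤ (∑' k, a k ^ 2) * (∑' k, b k ^ 2) := by
    have hlim : Filter.Tendsto (fun s : Finset ℕ => (∑ k ∈ s, a k * b k) ^ 2)
        Filter.atTop (nhds ((∑' k, a k * b k) ^ 2)) := hsab.hasSum.pow 2
    refine le_of_tendsto hlim (Filter.Eventually.of_forall fun s => ?_)
    calc (∑ k ∈ s, a k * b k) ^ 2
        ≤ (∑ k ∈ s, a k ^ 2) * (∑ k ∈ s, b k ^ 2) := Finset.sum_mul_sq_le_sq_mul_sq s a b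
      _ ≤ (∑' k, a k ^ 2) * (∑' k, b k ^ 2) :=
          mul_le_mul (Summable.sum_le_tsum s (fun k _ => sq_nonneg _) hsa2)
            (Summable.sum_le_tsum s (fun k _ => sq_nonneg _) hsb2)
            (Finset.sum_nonneg fun k _ => sq_nonneg _)
            (tsum_nonneg fun k => sq_nonneg _)
  calc (∑' k : ℕ, Real.exp (-c * ((k : ℝ) + 1)) / ((k : ℝ) + 1) ^ 3) ^ 2
      = (∑' k, a k * b k) ^ 2 := by rw [tsum_congr fun k => (hab k).symm]
    _ ≤ (∑' k, a k ^ 2) * (∑' k, b k ^ 2) := hmain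
    _ = _ := by rw [tsum_congr ha2, tsum_congr hb2]

private lemma hasDerivAt_main {c : ℝ} (hc : 0 < c) :
    HasDerivAt (fun c : ℝ =>
      (8 * π / 27) *
        (∑' k : ℕ, Real.exp (-c * ((k : ℝ) + 1)) / ((k : ℝ) + 1) ^ 3) ^ 4 /
        (∑' k : ℕ, Real.exp (-c * ((k : ℝ) + 1)) / ((k : ℝ) + 1) ^ 4) ^ 3)
      ((((8 * π / 27) * ((4 : ℕ) *
          (∑' k : ℕ, Real.exp (-c * ((k : ℝ) + 1)) / ((k : ℝ) + 1) ^ 3) ^ 3 *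
          (-∑' k : ℕ, Real.exp (-c * ((k : ℝ) + 1)) / ((k : ℝ) + 1) ^ 2))) *
        (∑' k : ℕ, Real.exp (-c * ((k : ℝ) + 1)) / ((k : ℝ) + 1) ^ 4) ^ 3 -
        ((8 * π / 27) * (∑' k : ℕ, Real.exp (-c * ((k : ℝ) + 1)) / ((k : ℝ) + 1) ^ 3) ^ 4) *
        ((3 : ℕ) * (∑' k : ℕ, Real.exp (-c * ((k : ℝ) + 1)) / ((k : ℝ) + 1) ^ 4) ^ 2 *
          (-∑' k : ℕ, Real.exp (-c * ((k : ℝ) + 1)) / ((k : ℝ) + 1) ^ 3))) /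
        ((∑' k : ℕ, Real.exp (-c * ((k : ℝ) + 1)) / ((k : ℝ) + 1) ^ 4) ^ 3) ^ 2) c := by
  have h3 := hasDerivAt_S 2 hc
  have h4 := hasDerivAt_S 3 hc
  have p4 := S_pos 4 hc
  have h4ne : (∑' k : ℕ, Real.exp (-c * ((k : ℝ) + 1)) / ((k : ℝ) + 1) ^ 4) ^ 3 ≠ 0 :=
    ne_of_gt (by positivity)
  exact ((h3.pow 4).const_mul (8 * π / 27)).div (h4.pow 3) h4ne

theorem stmt2 :
    StrictAntiOn (fun c : ℝ =>
      (8 * π / 27) *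
        (∑' k : ℕ, Real.exp (-c * ((k : ℝ) + 1)) / ((k : ℝ) + 1) ^ 3) ^ 4 /
        (∑' k : ℕ, Real.exp (-c * ((k : ℝ) + 1)) / ((k : ℝ) + 1) ^ 4) ^ 3)
      (Set.Ioi (0 : ℝ)) := by
  apply strictAntiOn_of_deriv_neg (convex_Ioi 0)
  · intro x hx
    exact (hasDerivAt_main hx).differentiableAt.continuousAt.continuousWithinAt
  · intro c hc
    rw [interior_Ioi] at hc
    have hc' : 0 < c := hc
    rw [(hasDerivAt_main hc').deriv]
    set S2 := ∑' k : ℕ, Real.exp (-c * ((k : ℝ) + 1)) / ((k : ℝ) + 1) ^ 2 with hS2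
    set S3 := ∑' k : ℕ, Real.exp (-c * ((k : ℝ) + 1)) / ((k : ℝ) + 1) ^ 3 with hS3
    set S4 := ∑' k : ℕ, Real.exp (-c * ((k : ℝ) + 1)) / ((k : ℝ) + 1) ^ 4 with hS4
    have p2 : 0 < S2 := S_pos 2 hc'
    have p3 : 0 < S3 := S_pos 3 hc'
    have p4 : 0 < S4 := S_pos 4 hc'
    have hcs : S3 ^ 2 ≤ S2 * S4 := cauchy_schwarz hc'
    have hpi : (0 : ℝ) < π := Real.pi_pos
    apply div_neg_of_neg_of_pos
    · have hnum : (8 * π / 27 * (((4 : ℕ) : ℝ) * S3 ^ 3 * -S2)) * S4 ^ 3 -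
          8 * π / 27 * S3 ^ 4 * (((3 : ℕ) : ℝ) * S4 ^ 2 * -S3) =
          (8 * π / 27) * (S3 ^ 3 * S4 ^ 2) * (3 * S3 ^ 2 - 4 * (S2 * S4)) := by
        push_cast; ring
      rw [hnum]
      apply mul_neg_of_pos_of_neg
      · positivity
      · nlinarith
    · positivity
end

section
/- Suppose F : ℝ³ → ℝ is integrable, nonnegative, not a.e. zero, with ∫ F dv = ∫ J⁰ dv and ∫ |v|F dv = ∫ |v|J⁰ dv where J⁰(v) = 1/(e^{1+|v|} − 1). If c > 0 and γ > 0 satisfy γ³ ∫_{ℝ³} (e^{c+|v|} − 1)^{−1} dv = ∫ F dv and γ⁴ ∫_{ℝ³} |v|(e^{c+|v|} − 1)^{−1} dv = ∫ |v|F dv, then c = 1 and γ = 1. -/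
open MeasureTheory Real

local notation "E3" => EuclideanSpace ℝ (Fin 3)

lemma denom_pos {c x : ℝ} (hc : 0 < c) (hx : 0 ≤ x) : 0 < Real.exp (c + x) - 1 := by
  nlinarith [Real.add_one_le_exp (c + x)]

lemma denom_lb {c x : ℝ} (hc : 0 < c) (hx : 0 ≤ x) :
    (Real.exp c - 1) * (1 + x) ^ 6 ≤ 46656 * (Real.exp (c + x) - 1) := by
  have h1 : x / 6 + 1 ≤ Real.exp (x / 6) := Real.add_one_le_exp _
  have h3 : 1 + x ≤ 6 * Real.exp (x / 6) := by nlinarith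
  have h2 : (1 + x) ^ 6 ≤ 46656 * Real.exp x := by
    calc (1 + x) ^ 6 ≤ (6 * Real.exp (x / 6)) ^ 6 := by
          apply pow_le_pow_left₀ (by linarith) h3
      _ = 46656 * Real.exp x := by
          have h6 : ((6:ℕ):ℝ) * (x/6) = x := by push_cast; ring
          rw [mul_pow, ← Real.exp_nat_mul, h6]
          norm_num
  have hec : 0 < Real.exp c - 1 := by nlinarith [Real.add_one_le_exp c]
  have h4 : (Real.exp c - 1) * Real.exp x ≤ Real.exp (c + x) - 1 := by
    rw [Real.exp_add]
    nlinarith [Real.one_le_exp hx]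
  nlinarith [h2, h4, hec.le]

lemma int_gen {c : ℝ} (hc : 0 < c) (k : E3 → ℝ) (hkc : Continuous k)
    (hk0 : ∀ v, 0 ≤ k v) (hk1 : ∀ v, k v ≤ 1 + ‖v‖) :
    Integrable (fun v : E3 => k v * (Real.exp (c + ‖v‖) - 1)⁻¹) := by
  have hbase : Integrable (fun v : E3 => (1 + ‖v‖) ^ (-(5:ℝ))) := by
    apply integrable_one_add_norm (μ := volume)
    simp [finrank_euclideanSpace_fin]
    norm_num
  have hK : Integrable (fun v : E3 =>
      (46656 * (Real.exp c - 1)⁻¹) * (1 + ‖v‖) ^ (-(5:ℝ))) := hbase.const_mul _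
  have hcont : Continuous fun v : E3 => k v * (Real.exp (c + ‖v‖) - 1)⁻¹ := by
    apply hkc.mul
    apply Continuous.inv₀
    · exact ((continuous_const.add continuous_norm).rexp.sub continuous_const)
    · intro v; exact (denom_pos hc (norm_nonneg v)).ne'
  refine hK.mono hcont.aestronglyMeasurable (Filter.Eventually.of_forall fun v => ?_)
  have hx : (0:ℝ) ≤ ‖v‖ := norm_nonneg v
  have h1x : (0:ℝ) < 1 + ‖v‖ := by linarith
  have hd : 0 < Real.exp (c + ‖v‖) - 1 := denom_pos hc hx
  have hec : 0 < Real.exp c - 1 := by nlinarith [Real.add_one_le_exp c]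
  have hrpow : (1 + ‖v‖) ^ (-(5:ℝ)) = ((1 + ‖v‖) ^ (5:ℕ))⁻¹ := by
    rw [← Real.rpow_natCast (1 + ‖v‖) 5, ← Real.rpow_neg h1x.le]
    norm_num
  rw [Real.norm_eq_abs, Real.norm_eq_abs, hrpow,
    abs_of_nonneg (mul_nonneg (hk0 v) (by positivity)), abs_of_nonneg (by positivity)]
  have key : k v * ((Real.exp c - 1) * (1 + ‖v‖) ^ (5:ℕ)) ≤
      46656 * (Real.exp (c + ‖v‖) - 1) := by
    have e1 : k v * ((Real.exp c - 1) * (1 + ‖v‖) ^ (5:ℕ)) ≤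
        (1 + ‖v‖) * ((Real.exp c - 1) * (1 + ‖v‖) ^ (5:ℕ)) := by
      apply mul_le_mul_of_nonneg_right (hk1 v) (by positivity)
    have e2 : (1 + ‖v‖) * ((Real.exp c - 1) * (1 + ‖v‖) ^ (5:ℕ)) =
        (Real.exp c - 1) * (1 + ‖v‖) ^ 6 := by ring
    have e3 := denom_lb hc hx
    linarith
  have goal' : k v * (Real.exp (c + ‖v‖) - 1)⁻¹ =
      k v / (Real.exp (c + ‖v‖) - 1) := by ring
  have goal'' : 46656 * (Real.exp c - 1)⁻¹ * ((1 + ‖v‖) ^ (5:ℕ))⁻¹ =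
      46656 / ((Real.exp c - 1) * (1 + ‖v‖) ^ (5:ℕ)) := by
    field_simp
  rw [goal', goal'', div_le_div_iff₀ hd (by positivity)]
  nlinarith [key, hd.le]

lemma intA {c : ℝ} (hc : 0 < c) :
    Integrable (fun v : E3 => (Real.exp (c + ‖v‖) - 1)⁻¹) := by
  have := int_gen hc (fun _ => 1) continuous_const (fun _ => zero_le_one)
    (fun v => le_add_of_nonneg_right (norm_nonneg v))
  simpa using this

lemma intB {c : ℝ} (hc : 0 < c) :
    Integrable (fun v : E3 => ‖v‖ * (Real.exp (c + ‖v‖) - 1)⁻¹) :=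
  int_gen hc (fun v => ‖v‖) continuous_norm (fun v => norm_nonneg v)
    (fun v => by linarith [norm_nonneg v])

lemma pos_of_pos_integrand (f : E3 → ℝ) (hf : Integrable f) (hpos : ∀ v, 0 < f v) :
    0 < ∫ v, f v := by
  rw [integral_pos_iff_support_of_nonneg (fun v => (hpos v).le) hf]
  have : Function.support f = Set.univ := Set.eq_univ_of_forall fun v => (hpos v).ne'
  rw [this]
  exact isOpen_univ.measure_pos volume ⟨0, trivial⟩

lemma Apos {c : ℝ} (hc : 0 < c) : 0 < ∫ v : E3, (Real.exp (c + ‖v‖) - 1)⁻¹ :=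
  pos_of_pos_integrand _ (intA hc) fun v => by
    have := denom_pos hc (norm_nonneg v); positivity

lemma Bpos {c : ℝ} (hc : 0 < c) : 0 < ∫ v : E3, ‖v‖ * (Real.exp (c + ‖v‖) - 1)⁻¹ := by
  have h := Apos hc
  rw [integral_pos_iff_support_of_nonneg]
  · have hs : {v : E3 | ‖v‖ ≠ 0} ⊆ Function.support
        fun v : E3 => ‖v‖ * (Real.exp (c + ‖v‖) - 1)⁻¹ := by
      intro v hv
      have hd := denom_pos hc (norm_nonneg v)
      have : 0 < ‖v‖ := lt_of_le_of_ne (norm_nonneg v) (Ne.symm hv)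
      exact (by positivity : (0:ℝ) < ‖v‖ * (Real.exp (c + ‖v‖) - 1)⁻¹).ne'
    refine lt_of_lt_of_le ?_ (measure_mono hs)
    have hopen : IsOpen {v : E3 | ‖v‖ ≠ 0} := by
      have : {v : E3 | ‖v‖ ≠ 0} = {(0:E3)}ᶜ := by
        ext v; simp [norm_eq_zero]
      rw [this]
      exact isOpen_compl_singleton
    refine hopen.measure_pos volume ?_
    refine ⟨EuclideanSpace.single 0 1, ?_⟩
    rw [Set.mem_setOf_eq, EuclideanSpace.norm_single]
    norm_num
  · intro v
    have hd := denom_pos hc (norm_nonneg v)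
    positivity
  · exact intB hc

lemma Astrict {a b : ℝ} (ha : 0 < a) (hab : a < b) :
    (∫ v : E3, (Real.exp (b + ‖v‖) - 1)⁻¹) < ∫ v : E3, (Real.exp (a + ‖v‖) - 1)⁻¹ := by
  have hb : 0 < b := ha.trans hab
  have hdiff : 0 < ∫ v : E3,
      ((Real.exp (a + ‖v‖) - 1)⁻¹ - (Real.exp (b + ‖v‖) - 1)⁻¹) := by
    apply pos_of_pos_integrand _ ((intA ha).sub (intA hb))
    intro v
    show (0:ℝ) < (Real.exp (a + ‖v‖) - 1)⁻¹ - (Real.exp (b + ‖v‖) - 1)⁻¹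
    have hda := denom_pos ha (norm_nonneg v)
    have hdb := denom_pos hb (norm_nonneg v)
    have : Real.exp (a + ‖v‖) < Real.exp (b + ‖v‖) := by
      apply Real.exp_lt_exp.2; linarith
    have h2 : (Real.exp (b + ‖v‖) - 1)⁻¹ < (Real.exp (a + ‖v‖) - 1)⁻¹ := by
      apply inv_strictAnti₀ hda
      linarith
    linarith
  rw [integral_sub (intA ha) (intA hb)] at hdiff
  linarith

lemma core_ineq {a b r s : ℝ} (ha : 0 < a) (hab : a < b) (hr : 0 ≤ r) (hrs : r ≤ s) :
    (Real.exp (b + r) - 1)⁻¹ * (Real.exp (a + s) - 1)⁻¹ ≤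
    (Real.exp (a + r) - 1)⁻¹ * (Real.exp (b + s) - 1)⁻¹ := by
  have hb : 0 < b := ha.trans hab
  have hs : 0 ≤ s := hr.trans hrs
  have d1 := denom_pos hb hr
  have d2 := denom_pos ha hs
  have d3 := denom_pos ha hr
  have d4 := denom_pos hb hs
  rw [← mul_inv, ← mul_inv]
  apply inv_anti₀ (by positivity)
  have key : 0 ≤ (Real.exp b - Real.exp a) * (Real.exp s - Real.exp r) :=
    mul_nonneg (by nlinarith [Real.exp_le_exp.2 hab.le])
      (by nlinarith [Real.exp_le_exp.2 hrs])
  rw [Real.exp_add, Real.exp_add, Real.exp_add, Real.exp_add]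
  nlinarith [key]

lemma cross {a b : ℝ} (ha : 0 < a) (hab : a < b) :
    (∫ v : E3, (Real.exp (b + ‖v‖) - 1)⁻¹) *
      (∫ v : E3, ‖v‖ * (Real.exp (a + ‖v‖) - 1)⁻¹) ≤
    (∫ v : E3, (Real.exp (a + ‖v‖) - 1)⁻¹) *
      (∫ v : E3, ‖v‖ * (Real.exp (b + ‖v‖) - 1)⁻¹) := by
  have hb : 0 < b := ha.trans hab
  set fa : E3 → ℝ := fun v => (Real.exp (a + ‖v‖) - 1)⁻¹ with hfa
  set fb : E3 → ℝ := fun v => (Real.exp (b + ‖v‖) - 1)⁻¹ with hfb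
  have Ia : Integrable fa := intA ha
  have Ib : Integrable fb := intA hb
  have Ja : Integrable (fun v : E3 => ‖v‖ * fa v) := intB ha
  have Jb : Integrable (fun v : E3 => ‖v‖ * fb v) := intB hb
  have i1 : Integrable (fun p : E3 × E3 => fb p.1 * (‖p.2‖ * fa p.2))
      (volume.prod volume) := Ib.mul_prod Ja
  have i2 : Integrable (fun p : E3 × E3 => fa p.1 * (‖p.2‖ * fb p.2))
      (volume.prod volume) := Ia.mul_prod Jb
  have i3 : Integrable (fun p : E3 × E3 => (‖p.1‖ * fb p.1) * fa p.2)
      (volume.prod volume) := Jb.mul_prod Ia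
  have i4 : Integrable (fun p : E3 × E3 => (‖p.1‖ * fa p.1) * fb p.2)
      (volume.prod volume) := Ja.mul_prod Ib
  have hpt : ∀ p : E3 × E3,
      (fun p : E3 × E3 => (‖p.2‖ - ‖p.1‖) * (fb p.1 * fa p.2 - fa p.1 * fb p.2)) p ≤ 0 := by
    intro ⟨v, w⟩
    simp only
    rcases le_total ‖v‖ ‖w‖ with h | h
    · apply mul_nonpos_of_nonneg_of_nonpos (by linarith)
      have := core_ineq ha hab (norm_nonneg v) h
      simp only [hfa, hfb]
      linarith
    · apply mul_nonpos_of_nonpos_of_nonneg (by linarith)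
      have := core_ineq ha hab (norm_nonneg w) h
      simp only [hfa, hfb]
      linarith
  have key : (∫ p : E3 × E3, (‖p.2‖ - ‖p.1‖) * (fb p.1 * fa p.2 - fa p.1 * fb p.2)
      ∂(volume.prod volume)) ≤ 0 := integral_nonpos hpt
  have expand : (fun p : E3 × E3 => (‖p.2‖ - ‖p.1‖) * (fb p.1 * fa p.2 - fa p.1 * fb p.2)) =
      fun p : E3 × E3 => fb p.1 * (‖p.2‖ * fa p.2) - fa p.1 * (‖p.2‖ * fb p.2)
        - (‖p.1‖ * fb p.1) * fa p.2 + (‖p.1‖ * fa p.1) * fb p.2 := by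
    funext p; ring
  have i12 : Integrable (fun p : E3 × E3 => fb p.1 * (‖p.2‖ * fa p.2)
      - fa p.1 * (‖p.2‖ * fb p.2)) (volume.prod volume) := i1.sub i2
  have i123 : Integrable (fun p : E3 × E3 => fb p.1 * (‖p.2‖ * fa p.2)
      - fa p.1 * (‖p.2‖ * fb p.2) - (‖p.1‖ * fb p.1) * fa p.2) (volume.prod volume) :=
    i12.sub i3
  have e1 := integral_prod_mul (μ := (volume : Measure E3)) (ν := (volume : Measure E3))
    fb (fun v => ‖v‖ * fa v)
  have e2 := integral_prod_mul (μ := (volume : Measure E3)) (ν := (volume : Measure E3))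
    fa (fun v => ‖v‖ * fb v)
  have e3' := integral_prod_mul (μ := (volume : Measure E3)) (ν := (volume : Measure E3))
    (fun v => ‖v‖ * fb v) fa
  have e4' := integral_prod_mul (μ := (volume : Measure E3)) (ν := (volume : Measure E3))
    (fun v => ‖v‖ * fa v) fb
  rw [expand, integral_add i123 i4, integral_sub i12 i3,
    integral_sub i1 i2, e1, e2, e3', e4'] at key
  simp only [hfa, hfb] at key ⊢
  linarith

theorem stmt14 (F : EuclideanSpace ℝ (Fin 3) → ℝ) (hF : Integrable F)
    (hpos : ∀ v, 0 ≤ F v) (hne : ¬ (F =ᵐ[volume] 0))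
    (h1 : ∫ v, F v = ∫ v : EuclideanSpace ℝ (Fin 3), 1 / (Real.exp (1 + ‖v‖) - 1))
    (h2 : ∫ v : EuclideanSpace ℝ (Fin 3), ‖v‖ * F v =
      ∫ v : EuclideanSpace ℝ (Fin 3), ‖v‖ / (Real.exp (1 + ‖v‖) - 1))
    (c γ : ℝ) (hc : 0 < c) (hγ : 0 < γ)
    (hg1 : γ ^ 3 * ∫ v : EuclideanSpace ℝ (Fin 3), (Real.exp (c + ‖v‖) - 1)⁻¹ =
      ∫ v, F v)
    (hg2 : γ ^ 4 * ∫ v : EuclideanSpace ℝ (Fin 3), ‖v‖ * (Real.exp (c + ‖v‖) - 1)⁻¹ =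
      ∫ v : EuclideanSpace ℝ (Fin 3), ‖v‖ * F v) :
    c = 1 ∧ γ = 1 := by
  simp only [one_div] at h1
  simp only [div_eq_mul_inv] at h2
  rw [h1] at hg1
  rw [h2] at hg2
  set A1 : ℝ := ∫ v : EuclideanSpace ℝ (Fin 3), (Real.exp (1 + ‖v‖) - 1)⁻¹ with hA1d
  set B1 : ℝ := ∫ v : EuclideanSpace ℝ (Fin 3), ‖v‖ * (Real.exp (1 + ‖v‖) - 1)⁻¹ with hB1d
  set Ac : ℝ := ∫ v : EuclideanSpace ℝ (Fin 3), (Real.exp (c + ‖v‖) - 1)⁻¹ with hAcd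
  set Bc : ℝ := ∫ v : EuclideanSpace ℝ (Fin 3), ‖v‖ * (Real.exp (c + ‖v‖) - 1)⁻¹ with hBcd
  have hA1 : 0 < A1 := Apos one_pos
  have hB1 : 0 < B1 := Bpos one_pos
  have hAc : 0 < Ac := Apos hc
  have hBc : 0 < Bc := Bpos hc
  have e4 : γ ^ 12 * Ac ^ 4 = A1 ^ 4 := by rw [← hg1]; ring
  have e3 : γ ^ 12 * Bc ^ 3 = B1 ^ 3 := by rw [← hg2]; ring
  have eq : A1 ^ 4 * Bc ^ 3 = Ac ^ 4 * B1 ^ 3 := by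
    rw [← e4, ← e3]; ring
  have hceq : c = 1 := by
    by_contra hne'
    rcases lt_or_gt_of_ne hne' with h | h
    · -- c < 1 : A1 < Ac and A1 * Bc ≤ Ac * B1
      have s1 : A1 < Ac := Astrict hc h
      have s2 : A1 * Bc ≤ Ac * B1 := cross hc h
      have p1 : A1 * (A1 * Bc) ^ 3 ≤ A1 * (Ac * B1) ^ 3 :=
        mul_le_mul_of_nonneg_left (pow_le_pow_left₀ (by positivity) s2 3) hA1.le
      have p2 : A1 * (Ac * B1) ^ 3 < Ac * (Ac * B1) ^ 3 :=
        mul_lt_mul_of_pos_right s1 (by positivity)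
      nlinarith [eq, p1, p2]
    · -- 1 < c : Ac < A1 and Ac * B1 ≤ A1 * Bc
      have s1 : Ac < A1 := Astrict one_pos h
      have s2 : Ac * B1 ≤ A1 * Bc := cross one_pos h
      have p1 : Ac * (Ac * B1) ^ 3 ≤ Ac * (A1 * Bc) ^ 3 :=
        mul_le_mul_of_nonneg_left (pow_le_pow_left₀ (by positivity) s2 3) hAc.le
      have p2 : Ac * (A1 * Bc) ^ 3 < A1 * (A1 * Bc) ^ 3 :=
        mul_lt_mul_of_pos_right s1 (by positivity)
      nlinarith [eq, p1, p2]
  subst hceq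
  have hAcA1 : Ac = A1 := rfl
  have hγ3 : γ ^ 3 = 1 := by
    have := hg1
    rw [hAcA1] at this
    have h' : γ ^ 3 * A1 = 1 * A1 := by rw [this]; ring
    exact mul_right_cancel₀ hA1.ne' h'
  have hγ1 : γ = 1 := by
    by_contra hne''
    rcases lt_or_gt_of_ne hne'' with h | h
    · have : γ ^ 3 < 1 := pow_lt_one₀ hγ.le h (by norm_num)
      linarith
    · have : 1 < γ ^ 3 := one_lt_pow₀ h (by norm_num)
      linarith
  exact ⟨rfl, hγ1⟩
end
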